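/- Let X and X' be affine varieties with isomorphic cylinders X × A^1 ≅ X' × A^1, and suppose X admits a surjection π : X → C onto a smooth affine curve C with C not isomorphic to A^1 (so that every morphism A^1 → C is constant). Then the composite X' × A^1 → X × A^1 → C factors through the projection X' × A^1 → X', giving a surjection π' : X' → C, and the isomorphism of cylinders is an isomorphism over C. -/

import Mathlib

open Polynomial

/-- Nullstellensatz: the residue field of a maximal ideal of a finitely generated
algebra over an algebraically closed field is the field itself. -/
lemma aux_residue_bij {k B : Type*} [Field k] [IsAlgClosed k] [CommRing B] [Algebra k B]
    [Algebra.FiniteType k B] (m : Ideal B) [m.IsMaximal] :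
    Function.Bijective (algebraMap k (B ⧸ m)) := by
  letI : Field (B ⧸ m) := Ideal.Quotient.field m
  have hft : Algebra.FiniteType k (B ⧸ m) :=
    Algebra.FiniteType.of_surjective (Ideal.Quotient.mkₐ k m)
      (Ideal.Quotient.mkₐ_surjective k m)
  have hfin : Module.Finite k (B ⧸ m) := finite_of_finite_type_of_isJacobsonRing k _
  have hint : Algebra.IsIntegral k (B ⧸ m) := Algebra.IsIntegral.of_finite k _
  exact ⟨(algebraMap k (B ⧸ m)).injective,
    IsAlgClosed.algebraMap_bijective_of_isIntegral.2⟩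

/-- In a reduced finitely generated algebra over a field, an element lying in every
maximal ideal is zero. -/
lemma aux_mem_all_maximal_eq_zero {k B : Type*} [Field k] [CommRing B] [IsReduced B]
    [Algebra k B] [Algebra.FiniteType k B] {x : B}
    (hx : ∀ m : Ideal B, m.IsMaximal → x ∈ m) : x = 0 := by
  haveI : IsJacobsonRing B := isJacobsonRing_of_finiteType (A := k)
  have h1 : x ∈ (⊥ : Ideal B).jacobson :=
    Ideal.mem_sInf.mpr fun {J} hJ => hx J hJ.2
  have h2 : (⊥ : Ideal B).jacobson = ⊥ := by
    rw [← Ideal.radical_eq_jacobson]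
    simpa [nilradical] using (nilradical_eq_zero B)
  rw [h2] at h1
  simpa using h1

theorem stmt_8 {k : Type*} [Field k] [IsAlgClosed k] [CharZero k]
    {R A A' : Type*} [CommRing R] [IsDomain R] [Algebra k R] [Algebra.FiniteType k R]
    [CommRing A] [IsReduced A] [Algebra k A] [Algebra.FiniteType k A]
    [CommRing A'] [IsReduced A'] [Algebra k A'] [Algebra.FiniteType k A']
    (hdim : ringKrullDim R = 1)
    (hC : ∀ φ : R →ₐ[k] Polynomial k, ∀ r : R,
      φ r ∈ Set.range (Polynomial.C : k → Polynomial k))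
    (π : R →ₐ[k] A) (hπ : Function.Injective π)
    (hπsurj : ∀ P : Ideal R, P.IsMaximal →
      ∃ Q : Ideal A, Q.IsMaximal ∧ P = Q.comap π.toRingHom)
    (Φ : Polynomial A ≃ₐ[k] Polynomial A') :
    ∃ π' : R →ₐ[k] A',
      (∀ r : R, Φ (Polynomial.C (π r)) = Polynomial.C (π' r)) ∧
      (∀ P : Ideal R, P.IsMaximal →
        ∃ Q : Ideal A', Q.IsMaximal ∧ P = Q.comap π'.toRingHom) := by
  classical
  -- the composite R → A[X] → A'[X]
  let ψ : R →ₐ[k] Polynomial A' :=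
    (Φ.toAlgHom.comp (Polynomial.CAlgHom : A →ₐ[k] Polynomial A)).comp π
  have hψ : ∀ r : R, ψ r = Φ (Polynomial.C (π r)) := fun r => rfl
  -- all higher coefficients of ψ r vanish
  have hcoeff : ∀ (r : R) (n : ℕ), n ≠ 0 → (ψ r).coeff n = 0 := by
    intro r n hn
    apply aux_mem_all_maximal_eq_zero (k := k)
    intro m hm
    haveI := hm
    letI : Field (A' ⧸ m) := Ideal.Quotient.field m
    have hbij := aux_residue_bij (k := k) m
    let e : k ≃ₐ[k] (A' ⧸ m) := AlgEquiv.ofBijective (Algebra.ofId k (A' ⧸ m)) hbij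
    -- compose to get an algebra map R → k[X]
    let θ : R →ₐ[k] Polynomial k :=
      (Polynomial.mapAlgHom (e.symm.toAlgHom.comp (Ideal.Quotient.mkₐ k m))).comp ψ
    obtain ⟨c, hc⟩ := hC θ r
    have hθc : (θ r).coeff n = e.symm (Ideal.Quotient.mk m ((ψ r).coeff n)) := by
      simp [θ, Polynomial.mapAlgHom, Polynomial.coeff_map]
    have hzero : (θ r).coeff n = 0 := by
      rw [← hc, Polynomial.coeff_C, if_neg hn]
    rw [hθc] at hzero
    have : Ideal.Quotient.mk m ((ψ r).coeff n) = 0 := by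
      apply e.symm.injective
      simpa using hzero
    exact (Ideal.Quotient.eq_zero_iff_mem).mp this
  -- ψ r is a constant polynomial
  have hconst : ∀ r : R, ψ r = Polynomial.C ((ψ r).coeff 0) := by
    intro r
    ext n
    rcases eq_or_ne n 0 with rfl | hn
    · simp
    · rw [Polynomial.coeff_C, if_neg hn]
      exact hcoeff r n hn
  -- define π'
  let π' : R →ₐ[k] A' :=
    { toRingHom := (Polynomial.constantCoeff : Polynomial A' →+* A').comp ψ.toRingHom
      commutes' := fun c => by
        simp [Polynomial.algebraMap_apply] }
  have hπ' : ∀ r : R, π' r = (ψ r).coeff 0 := fun r => rfl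
  refine ⟨π', fun r => by rw [← hψ, hπ']; exact hconst r, ?_⟩
  intro P hP
  obtain ⟨Q₀, hQ₀max, hPQ₀⟩ := hπsurj P hP
  haveI := hQ₀max
  letI : Field (A ⧸ Q₀) := Ideal.Quotient.field Q₀
  -- maximal ideal of A[X] over Q₀ (constant term in Q₀)
  let φA : Polynomial A →+* A ⧸ Q₀ :=
    (Ideal.Quotient.mk Q₀).comp (Polynomial.constantCoeff)
  have hφAsurj : Function.Surjective φA := by
    intro x
    obtain ⟨a, rfl⟩ := Ideal.Quotient.mk_surjective x
    exact ⟨Polynomial.C a, by simp [φA]⟩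
  let M : Ideal (Polynomial A) := RingHom.ker φA
  haveI hMmax : M.IsMaximal := RingHom.ker_isMaximal_of_surjective φA hφAsurj
  -- transport to A'[X]
  let M' : Ideal (Polynomial A') := M.comap (Φ.symm : Polynomial A' ≃ₐ[k] Polynomial A).toRingHom
  haveI hM'max : M'.IsMaximal :=
    Ideal.comap_isMaximal_of_surjective _ Φ.symm.surjective
  letI : Field (Polynomial A' ⧸ M') := Ideal.Quotient.field M'
  -- residue field of M' is k
  haveI : Algebra.FiniteType k (Polynomial A') :=
    Algebra.FiniteType.trans (inferInstance : Algebra.FiniteType k A')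
      (inferInstance : Algebra.FiniteType A' (Polynomial A'))
  have hbij' := aux_residue_bij (k := k) M'
  -- the map A' → A'[X]/M'
  let g : A' →+* (Polynomial A' ⧸ M') :=
    (Ideal.Quotient.mk M').comp (Polynomial.C)
  have hgsurj : Function.Surjective g := by
    intro x
    obtain ⟨c, hc⟩ := hbij'.2 x
    refine ⟨algebraMap k A' c, ?_⟩
    rw [← hc]
    have : (algebraMap k (Polynomial A' ⧸ M')) c =
        Ideal.Quotient.mk M' (algebraMap k (Polynomial A') c) := rfl
    rw [this]
    rfl
  refine ⟨RingHom.ker g, RingHom.ker_isMaximal_of_surjective g hgsurj, ?_⟩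
  ext r
  have key : π' r ∈ RingHom.ker g ↔ π r ∈ Q₀ := by
    rw [RingHom.mem_ker]
    have h1 : g (π' r) = 0 ↔ Polynomial.C (π' r) ∈ M' := by
      simp only [g, RingHom.comp_apply]
      exact Ideal.Quotient.eq_zero_iff_mem
    rw [h1]
    have h2 : Polynomial.C (π' r) ∈ M' ↔
        Φ.symm (Polynomial.C (π' r)) ∈ M := Iff.rfl
    rw [h2]
    have h3 : Φ.symm (Polynomial.C (π' r)) = Polynomial.C (π r) := by
      have := hconst r
      rw [← hπ'] at this
      have hval : Φ (Polynomial.C (π r)) = Polynomial.C (π' r) := by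
        rw [← hψ]; exact this
      rw [← hval, AlgEquiv.symm_apply_apply]
    rw [h3]
    simp only [M, RingHom.mem_ker, φA, RingHom.comp_apply,
      Polynomial.constantCoeff_apply, Polynomial.coeff_C_zero]
    exact Ideal.Quotient.eq_zero_iff_mem
  rw [hPQ₀]
  simp only [Ideal.mem_comap]
  exact key.symm
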